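/- Let (A,B) be a conic transition with transition module 𝒯 = B/ι(A). Then 𝒯 is a cyclic ℤ_p[T]-module annihilated by ν = ((ω+1)^p−1)/ω, and consequently p-rank(B) ≤ p-rank(A) + (p−1)·d, where d = deg(ω). -/

import Mathlib

open Polynomial

private lemma nu_map_aux (p : ℕ) (hp : p.Prime) (ω : Polynomial ℤ) (d : ℕ) (hmonic : ω.Monic)
    (hdeg : ω.natDegree = d) (hmodp : ∀ i < d, (p:ℤ) ∣ ω.coeff i) :
    (∑ i ∈ Finset.range p, (ω+1)^i).map (Int.castRingHom (ZMod p)) = X ^ ((p-1)*d) := by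
  haveI := Fact.mk hp
  have hω : ω.map (Int.castRingHom (ZMod p)) = X ^ d := by
    ext n
    rw [coeff_map, Polynomial.coeff_X_pow]
    rcases lt_trichotomy n d with h|h|h
    · rw [if_neg h.ne]
      simpa using (ZMod.intCast_zmod_eq_zero_iff_dvd _ _).2 (hmodp n h)
    · subst h
      rw [if_pos rfl, ← hdeg, hmonic.coeff_natDegree]; simp
    · rw [if_neg h.ne', Polynomial.coeff_eq_zero_of_natDegree_lt (by omega)]; simp
  rw [Polynomial.map_sum]
  simp only [Polynomial.map_pow, Polynomial.map_add, Polynomial.map_one, hω]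
  have hX : (X : (ZMod p)[X])^d ≠ 0 := pow_ne_zero _ X_ne_zero
  apply mul_right_cancel₀ hX
  have h1 : ((X:(ZMod p)[X])^d + 1) - 1 = X^d := by ring
  have h2 := geom_sum_mul ((X:(ZMod p)[X])^d + 1) p
  rw [h1] at h2
  rw [h2, add_pow_char, one_pow, add_sub_cancel_right, ← pow_mul, ← pow_add]
  have hp1 : p - 1 + 1 = p := Nat.succ_pred_eq_of_pos hp.pos
  rw [show (p-1)*d + d = ((p-1)+1)*d by ring, hp1, Nat.mul_comm]

/-- A *conic transition* `(A, B)` (Definition 2.4 of the paper): finite abelian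
`p`-groups `A`, `B` which are cyclic `ℤ_p[T]`-modules (via commuting endomorphisms
`TA`, `TB` coming from the action of a cyclic `p`-group), with a surjective norm
`N : B → A`, an injective lift `ι : A → B` satisfying `N ∘ ι = p`, a distinguished-type
polynomial `ω ≡ T^d mod p` annihilating `A` with `ι ∘ N = ν(TB)` for
`ν = ((ω+1)^p − 1)/ω = Σ_{i<p} (ω+1)^i`, kernel `ker N = ω·B`, and
`ω·x = 0 → x ∈ ι(A)`. -/
structure ConicTransition (p : ℕ) (A B : Type*) [AddCommGroup A] [AddCommGroup B] where
  hp : p.Prime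
  N : B →+ A
  ι : A →+ B
  TA : AddMonoid.End A
  TB : AddMonoid.End B
  genA : A
  genB : B
  ω : Polynomial ℤ
  d : ℕ
  hNsurj : Function.Surjective N
  hιinj : Function.Injective ι
  hNι : ∀ x : A, N (ι x) = p • x
  hcommN : ∀ x : B, N (TB x) = TA (N x)
  hcommι : ∀ x : A, ι (TA x) = TB (ι x)
  hTAnil : ∃ M : ℕ, TA ^ M = 0
  hTBnil : ∃ M : ℕ, TB ^ M = 0
  hgen : N genB = genA
  hcycA : ∀ x : A, ∃ f : Polynomial ℤ, x = Polynomial.aeval TA f genA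
  hcycB : ∀ x : B, ∃ f : Polynomial ℤ, x = Polynomial.aeval TB f genB
  hωmonic : ω.Monic
  hωdeg : ω.natDegree = d
  hdpos : 0 < d
  hωmodp : ∀ i < d, (p : ℤ) ∣ ω.coeff i
  hω0 : ω.coeff 0 = 0
  hωA : ∀ x : A, Polynomial.aeval TA ω x = 0
  hν : ∀ x : B, ι (N x) =
    Polynomial.aeval TB (∑ i ∈ Finset.range p, (ω + 1) ^ i) x
  hker : ∀ x : B, N x = 0 ↔ ∃ y : B, x = Polynomial.aeval TB ω y
  hωι : ∀ x : B, Polynomial.aeval TB ω x = 0 → ∃ a : A, x = ι a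
  hpA : ∀ x : A, ∃ k : ℕ, p ^ k • x = 0
  hpB : ∀ x : B, ∃ k : ℕ, p ^ k • x = 0

/-- In a conic transition `(A, B)` the transition module `𝒯 = B/ι(A)` is a
cyclic `ℤ_p[T]`-module annihilated by `ν = ((ω+1)^p − 1)/ω`, and consequently
`p`-rank`(B) ≤ p`-rank`(A) + (p−1)·d`. -/
theorem stmt_14 (p : ℕ) (A B : Type*) [AddCommGroup A] [AddCommGroup B]
    [Fintype A] [Fintype B] (ct : ConicTransition p A B)
    (rA rB : ℕ)
    (hrA : Nat.card (A ⧸ (p • AddMonoidHom.id A).range) = p ^ rA)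
    (hrB : Nat.card (B ⧸ (p • AddMonoidHom.id B).range) = p ^ rB) :
    (∀ x : B, ∃ f : Polynomial ℤ,
      x - Polynomial.aeval ct.TB f ct.genB ∈ ct.ι.range) ∧
    (∀ x : B,
      Polynomial.aeval ct.TB (∑ i ∈ Finset.range p, (ct.ω + 1) ^ i) x ∈ ct.ι.range) ∧
    rB ≤ rA + (p - 1) * ct.d := by
  obtain ⟨hp, N, ι, TA, TB, genA, genB, ω, d, hNsurj, hιinj, hNι, hcommN, hcommι, hTAnil, hTBnil,
    hgen, hcycA, hcycB, hωmonic, hωdeg, hdpos, hωmodp, hω0, hωA, hν, hker, hωι, hpA, hpB⟩ := ct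
  dsimp only at *
  refine ⟨?_, ?_, ?_⟩
  · intro x
    obtain ⟨f, hf⟩ := hcycB x
    exact ⟨f, by rw [hf, sub_self]; exact zero_mem _⟩
  · intro x
    exact ⟨N x, hν x⟩
  haveI := Fact.mk hp
  have hp1 : (1:ℕ) < p := hp.one_lt
  set ν : Polynomial ℤ := ∑ i ∈ Finset.range p, (ω + 1) ^ i with hνdef
  set D := (p-1)*d with hDdef
  -- ν ≡ X^D mod p
  have hmap : ν.map (Int.castRingHom (ZMod p)) = X ^ D :=
    nu_map_aux p hp ω d hωmonic hωdeg hωmodp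
  have hdvd : Polynomial.C (p:ℤ) ∣ (ν - X ^ D) := by
    rw [Polynomial.C_dvd_iff_dvd_coeff]
    intro i
    have h0 : ((ν - X ^ D).map (Int.castRingHom (ZMod p))) = 0 := by
      rw [Polynomial.map_sub, hmap, Polynomial.map_pow, Polynomial.map_X, sub_self]
    have h2 := congrArg (fun q => Polynomial.coeff q i) h0
    simp only [Polynomial.coeff_map, Polynomial.coeff_zero] at h2
    exact_mod_cast (ZMod.intCast_zmod_eq_zero_iff_dvd _ _).1 h2
  obtain ⟨g, hg⟩ := hdvd
  -- submodules
  let M1 : Submodule ℤ B := AddSubgroup.toIntSubmodule ι.range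
  let M2 : Submodule ℤ B := AddSubgroup.toIntSubmodule (p • AddMonoidHom.id B).range
  let t : Fin D → B := fun i => (TB ^ (i:ℕ)) genB
  let M3 : Submodule ℤ B := Submodule.span ℤ (Set.range t)
  have hM1 : ∀ a : A, ι a ∈ M1 := fun a => ⟨a, rfl⟩
  have hM2 : ∀ y : B, p • y ∈ M2 := fun y => ⟨y, by simp⟩
  have hM2' : ∀ y : B, (p:ℤ) • y ∈ M2 := fun y => by
    rw [natCast_zsmul]; exact hM2 y
  -- stability of M1 ⊔ M2 under TB
  have hstab : ∀ x, x ∈ M1 ⊔ M2 → TB x ∈ M1 ⊔ M2 := by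
    intro x hx
    rw [Submodule.mem_sup] at hx ⊢
    obtain ⟨u, hu, v, hv, rfl⟩ := hx
    obtain ⟨a, rfl⟩ := hu
    obtain ⟨y, rfl⟩ := hv
    refine ⟨ι (TA a), hM1 _, p • TB y, hM2 _, ?_⟩
    simp only [AddMonoidHom.smul_apply, AddMonoidHom.id_apply]
    rw [map_add, map_nsmul, hcommι]
  -- TB^D genB decomposes
  have hD1 : (TB ^ D) genB = ι (N genB) - (p:ℤ) • ((Polynomial.aeval TB g) genB) := by
    have hXD : (X ^ D : Polynomial ℤ) = ν - Polynomial.C (p:ℤ) * g := by rw [← hg]; ring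
    have h3 := congrArg (fun q => (Polynomial.aeval TB q) genB) hXD
    simp only [map_sub, map_mul, Polynomial.aeval_X_pow, Polynomial.aeval_C,
      algebraMap_int_eq, eq_intCast] at h3
    rw [h3]
    show (aeval TB ν) genB - ((aeval TB) ((p:ℤ) : Polynomial ℤ) * (aeval TB) g) genB = _
    rw [show ((aeval TB) ((p:ℤ) : Polynomial ℤ) * (aeval TB) g) genB
        = (aeval TB) ((p:ℤ) : Polynomial ℤ) (((aeval TB) g) genB) from rfl]
    rw [map_intCast, AddMonoid.End.intCast_apply, ← hν genB]
  have hDmem : ∀ n, (TB ^ (D + n)) genB ∈ M1 ⊔ M2 := by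
    intro n
    induction n with
    | zero =>
      rw [Nat.add_zero, hD1]
      exact sub_mem (Submodule.mem_sup_left (hM1 _)) (Submodule.mem_sup_right (hM2' _))
    | succ n ih =>
      have he : (TB ^ (D + (n+1))) genB = TB ((TB ^ (D+n)) genB) := by
        rw [show D + (n+1) = (D+n)+1 by ring, pow_succ']
        rfl
      rw [he]
      exact hstab _ ih
  have hall : ∀ n, (TB ^ n) genB ∈ M1 ⊔ M2 ⊔ M3 := by
    intro n
    rcases lt_or_ge n D with h | h
    · exact Submodule.mem_sup_right (Submodule.subset_span ⟨⟨n, h⟩, rfl⟩)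
    · have h4 := hDmem (n - D)
      rw [show D + (n - D) = n by omega] at h4
      exact Submodule.mem_sup_left h4
  have htop : ∀ x : B, x ∈ M1 ⊔ M2 ⊔ M3 := by
    intro x
    obtain ⟨f, rfl⟩ := hcycB x
    rw [Polynomial.aeval_eq_sum_range]
    erw [AddMonoidHom.finset_sum_apply]
    apply Submodule.sum_mem
    intro i _
    show f.coeff i • (TB ^ i) genB ∈ _
    exact Submodule.smul_mem _ _ (hall i)
  have hdec : ∀ x : B, ∃ (a : A) (c : Fin D → ℤ) (y : B),
      x = ι a + (∑ i, c i • t i) + p • y := by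
    intro x
    have hx := htop x
    rw [Submodule.mem_sup] at hx
    obtain ⟨u, hu, w, hw, rfl⟩ := hx
    rw [Submodule.mem_sup] at hu
    obtain ⟨u1, hu1, u2, hu2, rfl⟩ := hu
    obtain ⟨a, rfl⟩ := hu1
    obtain ⟨y, rfl⟩ := hu2
    rw [Submodule.mem_span_range_iff_exists_fun] at hw
    obtain ⟨c, rfl⟩ := hw
    refine ⟨a, c, y, ?_⟩
    simp only [AddMonoidHom.smul_apply, AddMonoidHom.id_apply]
    abel
  -- counting
  set P := (p • AddMonoidHom.id B).range with hPdef
  let π : B →+ B ⧸ P := QuotientAddGroup.mk' P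
  have hπp : ∀ y : B, π (p • y) = 0 := fun y =>
    (QuotientAddGroup.eq_zero_iff _).2 ⟨y, by simp⟩
  have hπzp : ∀ y : B, (p:ℤ) • π y = 0 := fun y => by
    rw [natCast_zsmul, ← map_nsmul]; exact hπp y
  set PA := (p • AddMonoidHom.id A).range with hPAdef
  have hkerle : PA ≤ (π.comp ι).ker := by
    intro a ha
    obtain ⟨a0, ha0⟩ := ha
    simp only [AddMonoidHom.smul_apply, AddMonoidHom.id_apply] at ha0
    rw [AddMonoidHom.mem_ker, AddMonoidHom.comp_apply, ← ha0, map_nsmul]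
    exact hπp _
  let hbar : A ⧸ PA →+ B ⧸ P := QuotientAddGroup.lift PA (π.comp ι) hkerle
  let F : (A ⧸ PA) × (Fin D → Fin p) → B ⧸ P :=
    fun z => hbar z.1 + ∑ i, ((z.2 i : ℕ)) • π (t i)
  have hFsurj : Function.Surjective F := by
    intro q
    obtain ⟨x, rfl⟩ := QuotientAddGroup.mk'_surjective P q
    obtain ⟨a, c, y, rfl⟩ := hdec x
    have hple : ∀ i : Fin D, (c i % p).toNat < p := by
      intro i
      have hpz : (0:ℤ) < (p:ℤ) := by exact_mod_cast hp.pos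
      have h1 : (0:ℤ) ≤ c i % p := Int.emod_nonneg _ hpz.ne'
      have h2 : c i % p < p := Int.emod_lt_of_pos _ hpz
      omega
    refine ⟨⟨QuotientAddGroup.mk' PA a, fun i => ⟨(c i % p).toNat, hple i⟩⟩, ?_⟩
    show hbar (QuotientAddGroup.mk' PA a) + ∑ i, ((c i % p).toNat) • π (t i) = _
    have hba : hbar (QuotientAddGroup.mk' PA a) = π (ι a) := rfl
    rw [hba]
    have hπx : (QuotientAddGroup.mk' P) (ι a + (∑ i, c i • t i) + p • y)
        = π (ι a) + ∑ i, c i • π (t i) := by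
      rw [map_add, map_add, hπp y, add_zero, map_sum]
      congr 1
    rw [hπx]
    have hred : ∀ i : Fin D, ((c i % (p:ℤ)).toNat) • π (t i) = (c i) • π (t i) := by
      intro i
      conv_rhs => rw [← Int.mul_ediv_add_emod (c i) (p:ℤ)]
      rw [add_smul, mul_comm, mul_smul, hπzp, smul_zero, zero_add,
        ← Int.toNat_of_nonneg (Int.emod_nonneg (c i) (by exact_mod_cast hp.ne_zero)),
        natCast_zsmul, Int.toNat_natCast]
    simp only [hred]
  haveI : Finite (A ⧸ PA) := Quotient.finite _
  have hcard : Nat.card (B ⧸ P) ≤ Nat.card ((A ⧸ PA) × (Fin D → Fin p)) :=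
    Nat.card_le_card_of_surjective F hFsurj
  have hc2 : Nat.card ((A ⧸ PA) × (Fin D → Fin p)) = p ^ rA * p ^ D := by
    rw [Nat.card_prod, hrA]
    congr 1
    simp [Nat.card_eq_fintype_card]
  rw [hrB, hc2, ← pow_add] at hcard
  exact (Nat.pow_le_pow_iff_right hp1).1 hcard
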